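/- On any simple graph class, every RSFOC2 formula of the form φ(x) = ∃^{≥n} y ( φ_{∅}(x,y) ∧ ψ(y) ) — asserting the existence of at least n nodes y with no relation to x that satisfy ψ — is equivalent to the condition N_total − N_adj ≥ n, where N_total is the number of nodes satisfying ψ in the whole graph and N_adj is the number of neighbors of x (via any relation) satisfying ψ. In particular, if ψ is computable from local feature aggregation, φ is computable using one additional global readout comparing a global count with a neighborhood count. -/

import Mathlib

inductive Var : Type
  | x | y
deriving DecidableEq

structure RelGraph (P1 P2 : Type) where
  V : Type
  [fintV : Fintype V]
  [decV : DecidableEq V]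
  unary : P1 → V → Prop
  rel : P2 → V → V → Prop
  [decU : ∀ p, DecidablePred (unary p)]
  [decR : ∀ r, DecidableRel (rel r)]

attribute [instance] RelGraph.fintV RelGraph.decV RelGraph.decU RelGraph.decR

inductive FOC2 (P1 P2 : Type) : Type
  | tru : FOC2 P1 P2
  | atom : P1 → Var → FOC2 P1 P2
  | rel : P2 → Var → Var → FOC2 P1 P2
  | and : FOC2 P1 P2 → FOC2 P1 P2 → FOC2 P1 P2
  | or : FOC2 P1 P2 → FOC2 P1 P2 → FOC2 P1 P2
  | not : FOC2 P1 P2 → FOC2 P1 P2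
  | exge : ℕ → Var → FOC2 P1 P2 → FOC2 P1 P2

variable {P1 P2 : Type}

/-- Satisfaction of a `FOC2` formula in a multi-relational graph under an assignment. -/
def RelGraph.sat (G : RelGraph P1 P2) : (Var → G.V) → FOC2 P1 P2 → Prop
  | _, .tru => True
  | σ, .atom p v => G.unary p (σ v)
  | σ, .rel r u w => G.rel r (σ u) (σ w)
  | σ, .and φ ψ => G.sat σ φ ∧ G.sat σ ψ
  | σ, .or φ ψ => G.sat σ φ ∨ G.sat σ ψ
  | σ, .not φ => ¬ G.sat σ φ
  | σ, .exge n v φ => ∃ S : Finset G.V, S.card = n ∧ ∀ a ∈ S, G.sat (Function.update σ v a) φ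

/-- Quantifier depth. -/
def FOC2.depth : FOC2 P1 P2 → ℕ
  | .tru => 0
  | .atom _ _ => 0
  | .rel _ _ _ => 0
  | .and φ ψ => max φ.depth ψ.depth
  | .or φ ψ => max φ.depth ψ.depth
  | .not φ => φ.depth
  | .exge _ _ φ => φ.depth + 1

/-- All counting thresholds are at most `m`. -/
def FOC2.thresholdsLe (m : ℕ) : FOC2 P1 P2 → Prop
  | .tru => True
  | .atom _ _ => True
  | .rel _ _ _ => True
  | .and φ ψ => φ.thresholdsLe m ∧ ψ.thresholdsLe m
  | .or φ ψ => φ.thresholdsLe m ∧ ψ.thresholdsLe m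
  | .not φ => φ.thresholdsLe m
  | .exge n _ φ => n ≤ m ∧ φ.thresholdsLe m

/-- Free variables. -/
def FOC2.freeVars : FOC2 P1 P2 → Finset Var
  | .tru => ∅
  | .atom _ v => {v}
  | .rel _ u w => {u, w}
  | .and φ ψ => φ.freeVars ∪ ψ.freeVars
  | .or φ ψ => φ.freeVars ∪ ψ.freeVars
  | .not φ => φ.freeVars
  | .exge _ v φ => φ.freeVars \ {v}

/-- Parse-tree size. -/
def FOC2.size : FOC2 P1 P2 → ℕ
  | .tru => 1
  | .atom _ _ => 1
  | .rel _ _ _ => 1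
  | .and φ ψ => φ.size + ψ.size + 1
  | .or φ ψ => φ.size + ψ.size + 1
  | .not φ => φ.size + 1
  | .exge _ _ φ => φ.size + 1


/-- Conjunction of a list of formulas (empty conjunction is `⊤`). -/
def listAnd : List (FOC2 P1 P2) → FOC2 P1 P2
  | [] => FOC2.tru
  | ψ :: l => FOC2.and ψ (listAnd l)

/-- The relation-specification formula `φ_S(u,w)`. -/
noncomputable def phiS [Fintype P2] [DecidableEq P2] (S : Finset P2) (u w : Var) :
    FOC2 P1 P2 :=
  listAnd ((Finset.univ.toList (α := P2)).map
    (fun r => if r ∈ S then FOC2.rel r u w else FOC2.not (FOC2.rel r u w)))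

lemma sat_congr (G : RelGraph P1 P2) (φ : FOC2 P1 P2) :
    ∀ σ τ : Var → G.V, (∀ w ∈ φ.freeVars, σ w = τ w) → (G.sat σ φ ↔ G.sat τ φ) := by
  induction φ with
  | tru => intro σ τ h; simp [RelGraph.sat]
  | atom p v => intro σ τ h; simp [RelGraph.sat, h v (by simp [FOC2.freeVars])]
  | rel r u w =>
      intro σ τ h
      simp [RelGraph.sat, h u (by simp [FOC2.freeVars]), h w (by simp [FOC2.freeVars])]
  | and φ ψ ihφ ihψ =>
      intro σ τ h
      simp only [RelGraph.sat]
      rw [ihφ σ τ (fun w hw => h w (by simp [FOC2.freeVars, hw])),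
        ihψ σ τ (fun w hw => h w (by simp [FOC2.freeVars, hw]))]
  | or φ ψ ihφ ihψ =>
      intro σ τ h
      simp only [RelGraph.sat]
      rw [ihφ σ τ (fun w hw => h w (by simp [FOC2.freeVars, hw])),
        ihψ σ τ (fun w hw => h w (by simp [FOC2.freeVars, hw]))]
  | not φ ih =>
      intro σ τ h
      simp only [RelGraph.sat]
      rw [ih σ τ h]
  | exge m v φ ih =>
      intro σ τ h
      simp only [RelGraph.sat]
      constructor <;> rintro ⟨S, hS, hall⟩ <;> refine ⟨S, hS, fun a ha => ?_⟩
      · rw [← ih (Function.update σ v a) (Function.update τ v a) ?_]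
        · exact hall a ha
        · intro w hw
          by_cases hv : w = v
          · subst hv; simp
          · simp only [Function.update_of_ne hv]
            exact h w (by simp [FOC2.freeVars, hw, hv])
      · rw [ih (Function.update σ v a) (Function.update τ v a) ?_]
        · exact hall a ha
        · intro w hw
          by_cases hv : w = v
          · subst hv; simp
          · simp only [Function.update_of_ne hv]
            exact h w (by simp [FOC2.freeVars, hw, hv])

lemma sat_listAnd (G : RelGraph P1 P2) (σ : Var → G.V) :
    ∀ l : List (FOC2 P1 P2), G.sat σ (listAnd l) ↔ ∀ φ ∈ l, G.sat σ φ := by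
  intro l
  induction l with
  | nil => simp [listAnd, RelGraph.sat]
  | cons a l ih => simp [listAnd, RelGraph.sat, ih]

lemma sat_phiS_empty [Fintype P2] [DecidableEq P2] (G : RelGraph P1 P2) (σ : Var → G.V)
    (u w : Var) : G.sat σ (phiS ∅ u w) ↔ ∀ r : P2, ¬ G.rel r (σ u) (σ w) := by
  simp [phiS, sat_listAnd, RelGraph.sat]

lemma exge_iff_ncard (G : RelGraph P1 P2) (σ : Var → G.V) (n : ℕ) (v : Var)
    (φ : FOC2 P1 P2) :
    G.sat σ (FOC2.exge n v φ) ↔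
      n ≤ {a : G.V | G.sat (Function.update σ v a) φ}.ncard := by
  constructor
  · rintro ⟨S, hS, hall⟩
    have hsub : (S : Set G.V) ⊆ {a : G.V | G.sat (Function.update σ v a) φ} :=
      fun a ha => hall a (by simpa using ha)
    calc n = (S : Set G.V).ncard := by simp [hS]
      _ ≤ _ := Set.ncard_le_ncard hsub (Set.toFinite _)
  · intro h
    obtain ⟨t, hts, htcard⟩ := Set.exists_subset_card_eq h
    refine ⟨(Set.toFinite t).toFinset, ?_, fun a ha => hts (by simpa using ha)⟩
    rw [← htcard, Set.ncard_eq_toFinset_card t (Set.toFinite t)]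

/-- On simple graphs, `∃^{≥n} y (φ_∅(x,y) ∧ ψ(y))` holds at `v` iff
`N_total − N_adj ≥ n`, where `N_total` counts the nodes satisfying `ψ` and `N_adj`
counts the neighbours of `v` (via any relation) satisfying `ψ`. -/
theorem stmt11 {P1 P2 : Type} [Fintype P2] [DecidableEq P2] (G : RelGraph P1 P2)
    (hsimple : ∀ (a b : G.V) (r s : P2), G.rel r a b → G.rel s a b → r = s)
    (ψ : FOC2 P1 P2) (hψ : ψ.freeVars ⊆ {Var.y}) (n : ℕ) (v : G.V) :
    (G.sat (fun _ => v) (FOC2.exge n Var.y (FOC2.and (phiS ∅ Var.x Var.y) ψ)) ↔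
      n + {u : G.V | (∃ r : P2, G.rel r v u) ∧ G.sat (fun _ => u) ψ}.ncard ≤
        {u : G.V | G.sat (fun _ => u) ψ}.ncard) := by
  rw [exge_iff_ncard]
  set A : Set G.V := {u : G.V | (∃ r : P2, G.rel r v u) ∧ G.sat (fun _ => u) ψ} with hA
  set T : Set G.V := {u : G.V | G.sat (fun _ => u) ψ} with hT
  have hsat : ∀ a : G.V,
      G.sat (Function.update (fun _ => v) Var.y a) ψ ↔ G.sat (fun _ => a) ψ := by
    intro a
    apply sat_congr
    intro w hw
    have : w = Var.y := by
      have := hψ hw; simpa using this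
    subst this; simp
  have hset : {a : G.V |
      G.sat (Function.update (fun _ => v) Var.y a) (FOC2.and (phiS ∅ Var.x Var.y) ψ)}
      = T \ A := by
    ext a
    simp only [Set.mem_setOf_eq, RelGraph.sat, sat_phiS_empty, hsat, Set.mem_diff, hA, hT,
      Set.mem_setOf_eq]
    constructor
    · rintro ⟨hno, hs⟩
      refine ⟨hs, fun h => ?_⟩
      obtain ⟨⟨r, hr⟩, _⟩ := h
      exact hno r (by simpa using hr)
    · rintro ⟨hs, hn⟩
      refine ⟨fun r hr => hn ⟨⟨r, by simpa using hr⟩, hs⟩, hs⟩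
  rw [hset]
  have hAT : A ⊆ T := fun a ha => ha.2
  rw [Set.ncard_diff hAT (Set.toFinite _)]
  have hle : A.ncard ≤ T.ncard := Set.ncard_le_ncard hAT (Set.toFinite _)
  omega
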